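/- The function d_𝕃(x,y) = cosh⁻¹(-⟨x,y⟩_L) defines a metric on 𝕃ⁿ (it is nonnegative, zero iff x = y, symmetric, and satisfies the triangle inequality). -/

import Mathlib

open Matrix BigOperators Real

noncomputable section

/-- Lorentzian inner product on ℝ^{n+1}. -/
def lprod {n : ℕ} (x y : Fin (n + 1) → ℝ) : ℝ :=
  ∑ i, (if i = 0 then (-1 : ℝ) else 1) * x i * y i

/-- The hyperboloid model 𝕃ⁿ ⊂ ℝ^{n+1}. -/
def Hyp (n : ℕ) : Set (Fin (n + 1) → ℝ) := {x | lprod x x = -1 ∧ 0 < x 0}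

/-- J = diag(-1, Iₙ). -/
def Jmat (n : ℕ) : Matrix (Fin (n + 1)) (Fin (n + 1)) ℝ :=
  Matrix.diagonal (fun i => if i = 0 then (-1 : ℝ) else 1)

/-- Inverse hyperbolic cosine. -/
def arcosh (t : ℝ) : ℝ := Real.log (t + Real.sqrt (t ^ 2 - 1))

/-- Geodesic distance on the hyperboloid. -/
def dL {n : ℕ} (x y : Fin (n + 1) → ℝ) : ℝ := _root_.arcosh (-(lprod x y))

lemma lprod_comm {n : ℕ} (x y : Fin (n + 1) → ℝ) : lprod x y = lprod y x := by
  unfold lprod; exact Finset.sum_congr rfl (fun i _ => by ring)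

lemma lprod_split {n : ℕ} (x y : Fin (n + 1) → ℝ) :
    lprod x y = -(x 0 * y 0) + ∑ i : Fin n, x i.succ * y i.succ := by
  rw [lprod, Fin.sum_univ_succ]
  simp [Fin.succ_ne_zero]

lemma lprod_sub_smul {n : ℕ} (x y z : Fin (n + 1) → ℝ) (a : ℝ) :
    lprod (x - a • y) z = lprod x z - a * lprod y z := by
  simp only [lprod, Pi.sub_apply, Pi.smul_apply, smul_eq_mul, Finset.mul_sum,
    ← Finset.sum_sub_distrib]
  exact Finset.sum_congr rfl (fun i _ => by ring)

lemma lprod_sub_smul_right {n : ℕ} (x y z : Fin (n + 1) → ℝ) (a : ℝ) :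
    lprod z (x - a • y) = lprod z x - a * lprod z y := by
  rw [lprod_comm, lprod_sub_smul, lprod_comm x z, lprod_comm y z]

-- spatial dot products notation via lprod_split

lemma spatial_nonneg {n : ℕ} (v : Fin (n + 1) → ℝ) :
    0 ≤ ∑ i : Fin n, v i.succ * v i.succ :=
  Finset.sum_nonneg (fun i _ => mul_self_nonneg _)

lemma spatial_cs {n : ℕ} (v w : Fin (n + 1) → ℝ) :
    (∑ i : Fin n, v i.succ * w i.succ) ^ 2 ≤
      (∑ i : Fin n, v i.succ * v i.succ) * (∑ i : Fin n, w i.succ * w i.succ) := by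
  have := Finset.sum_mul_sq_le_sq_mul_sq Finset.univ (fun i : Fin n => v i.succ)
    (fun i : Fin n => w i.succ)
  simpa [sq] using this

/-- key inequality : for points on the hyperboloid, -⟨x,y⟩ ≥ 1 -/
lemma neg_lprod_ge_one {n : ℕ} {x y : Fin (n + 1) → ℝ}
    (hx : x ∈ Hyp n) (hy : y ∈ Hyp n) : 1 ≤ -(lprod x y) := by
  obtain ⟨hx1, hx0⟩ := hx
  obtain ⟨hy1, hy0⟩ := hy
  rw [lprod_split] at hx1 hy1 ⊢
  set Sxx := ∑ i : Fin n, x i.succ * x i.succ with hSxx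
  set Syy := ∑ i : Fin n, y i.succ * y i.succ with hSyy
  set Sxy := ∑ i : Fin n, x i.succ * y i.succ with hSxy
  have hcs : Sxy ^ 2 ≤ Sxx * Syy := spatial_cs x y
  have hsub : 0 ≤ Sxx + Syy - 2 * Sxy := by
    have : 0 ≤ ∑ i : Fin n, (x i.succ - y i.succ) * (x i.succ - y i.succ) :=
      Finset.sum_nonneg (fun i _ => mul_self_nonneg _)
    rw [hSxx, hSyy, hSxy]
    simp only [sub_mul, mul_sub, Finset.sum_sub_distrib] at this
    nlinarith [this, Finset.sum_congr rfl (fun i (_ : i ∈ (Finset.univ : Finset (Fin n))) => mul_comm (x i.succ) (y i.succ))]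
  -- x0^2 = 1 + Sxx, y0^2 = 1 + Syy, x0 y0 > 0
  have hx2 : x 0 * x 0 = 1 + Sxx := by linarith
  have hy2 : y 0 * y 0 = 1 + Syy := by linarith
  have hxy0 : 0 < x 0 * y 0 := mul_pos hx0 hy0
  nlinarith [sq_nonneg (x 0 * y 0 - (1 + Sxy)), sq_nonneg (1 + Sxy), hcs]

lemma eq_of_neg_lprod_eq_one {n : ℕ} {x y : Fin (n + 1) → ℝ}
    (hx : x ∈ Hyp n) (hy : y ∈ Hyp n) (h : -(lprod x y) = 1) : x = y := by
  obtain ⟨hx1, hx0⟩ := hx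
  obtain ⟨hy1, hy0⟩ := hy
  rw [lprod_split] at hx1 hy1 h
  set Sxx := ∑ i : Fin n, x i.succ * x i.succ with hSxx
  set Syy := ∑ i : Fin n, y i.succ * y i.succ with hSyy
  set Sxy := ∑ i : Fin n, x i.succ * y i.succ with hSxy
  have hcs : Sxy ^ 2 ≤ Sxx * Syy := spatial_cs x y
  have hx2 : x 0 * x 0 = 1 + Sxx := by linarith
  have hy2 : y 0 * y 0 = 1 + Syy := by linarith
  have hxy : x 0 * y 0 = 1 + Sxy := by linarith
  have hdiffsum : ∑ i : Fin n, (x i.succ - y i.succ) * (x i.succ - y i.succ)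
      = Sxx + Syy - 2 * Sxy := by
    rw [hSxx, hSyy, hSxy]
    simp only [sub_mul, mul_sub, Finset.sum_sub_distrib]
    have : ∑ i : Fin n, y i.succ * x i.succ = ∑ i : Fin n, x i.succ * y i.succ :=
      Finset.sum_congr rfl (fun i _ => mul_comm _ _)
    linarith [this]
  have hdz : Sxx + Syy - 2 * Sxy ≤ 0 := by nlinarith [sq_nonneg (Sxx - Syy)]
  have hzero : ∀ i : Fin n, x i.succ - y i.succ = 0 := by
    intro i
    have hnn : ∀ j ∈ (Finset.univ : Finset (Fin n)),
        0 ≤ (x j.succ - y j.succ) * (x j.succ - y j.succ) := fun j _ => mul_self_nonneg _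
    have hsum0 : ∑ i : Fin n, (x i.succ - y i.succ) * (x i.succ - y i.succ) = 0 := by
      have := Finset.sum_nonneg hnn
      linarith [hdiffsum]
    have := (Finset.sum_eq_zero_iff_of_nonneg hnn).1 hsum0 i (Finset.mem_univ i)
    exact by nlinarith [this]
  have hSeq : Sxy = Sxx := by
    rw [hSxy, hSxx]
    exact Finset.sum_congr rfl (fun i _ => by
      have h := hzero i
      have hy : y i.succ = x i.succ := by linarith
      rw [hy])
  have h0 : x 0 = y 0 := by
    have : x 0 * y 0 = x 0 * x 0 := by rw [hxy, hx2, hSeq]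
    have hne : x 0 ≠ 0 := ne_of_gt hx0
    field_simp at this
    linarith
  funext i
  refine Fin.cases ?_ ?_ i
  · exact h0
  · intro j; have := hzero j; linarith

/-- Vectors Lorentz-orthogonal to a hyperboloid point are spacelike. -/
lemma spacelike_of_orth {n : ℕ} {y v : Fin (n + 1) → ℝ}
    (hy : y ∈ Hyp n) (hv : lprod v y = 0) : 0 ≤ lprod v v := by
  obtain ⟨hy1, hy0⟩ := hy
  rw [lprod_split] at hy1 hv ⊢
  have hcs := spatial_cs v y
  have hvv := spatial_nonneg v
  have hyy := spatial_nonneg y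
  set Svv := ∑ i : Fin n, v i.succ * v i.succ
  set Svy := ∑ i : Fin n, v i.succ * y i.succ
  set Syy := ∑ i : Fin n, y i.succ * y i.succ
  -- v0 y0 = Svy ; y0^2 = 1 + Syy
  have h1 : v 0 * y 0 = Svy := by linarith
  have h2 : y 0 * y 0 = 1 + Syy := by linarith
  have h1sq : (v 0 * y 0) * (v 0 * y 0) = Svy * Svy := by rw [h1]
  nlinarith [h1sq, hcs, hvv, hyy, sq_nonneg (v 0), h2]

/-- Cauchy–Schwarz on the orthogonal complement of a hyperboloid point. -/
lemma cs_orth {n : ℕ} {y u w : Fin (n + 1) → ℝ} (hy : y ∈ Hyp n)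
    (hu : lprod u y = 0) (hw : lprod w y = 0) :
    (lprod u w) ^ 2 ≤ lprod u u * lprod w w := by
  have key : ∀ t : ℝ, 0 ≤ lprod w w * (t * t) + (-2 * lprod u w) * t + lprod u u := by
    intro t
    have horth : lprod (u - t • w) y = 0 := by rw [lprod_sub_smul, hu, hw]; ring
    have := spacelike_of_orth hy horth
    rw [lprod_sub_smul, lprod_sub_smul_right, lprod_sub_smul_right] at this
    rw [lprod_comm w u] at this
    ring_nf at this ⊢
    linarith
  have := discrim_le_zero key
  rw [discrim] at this
  nlinarith [this]

lemma triangle_core {n : ℕ} {x y z : Fin (n + 1) → ℝ}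
    (hx : x ∈ Hyp n) (hy : y ∈ Hyp n) (hz : z ∈ Hyp n) :
    ((-(lprod x y)) * (-(lprod y z)) - (-(lprod x z))) ^ 2 ≤
      ((-(lprod x y)) ^ 2 - 1) * ((-(lprod y z)) ^ 2 - 1) := by
  set a : ℝ := -(lprod x y) with ha
  set b : ℝ := -(lprod y z) with hb
  set u : Fin (n + 1) → ℝ := x - a • y with hu
  set w : Fin (n + 1) → ℝ := z - b • y with hw
  have hyy : lprod y y = -1 := hy.1
  have hxy : lprod x y = -a := by rw [ha]; ring
  have hzy : lprod z y = -b := by rw [lprod_comm, hb]; ring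
  have huy : lprod u y = 0 := by rw [hu, lprod_sub_smul, hxy, hyy]; ring
  have hwy : lprod w y = 0 := by rw [hw, lprod_sub_smul, hzy, hyy]; ring
  have huu : lprod u u = a ^ 2 - 1 := by
    rw [hu, lprod_sub_smul, lprod_sub_smul_right, lprod_sub_smul_right, hxy, hyy,
      lprod_comm y x, hxy, hx.1]; ring
  have hww : lprod w w = b ^ 2 - 1 := by
    rw [hw, lprod_sub_smul, lprod_sub_smul_right, lprod_sub_smul_right, hzy, hyy,
      lprod_comm y z, hzy, hz.1]; ring
  have huw : lprod u w = a * b - (-(lprod x z)) := by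
    have hyz : lprod y z = -b := by rw [hb]; ring
    rw [hu, hw, lprod_sub_smul, lprod_sub_smul_right, lprod_sub_smul_right, hxy, hyz, hyy]
    ring
  have := cs_orth hy huy hwy
  rw [huu, hww, huw] at this
  exact this

lemma arcosh_nonneg {t : ℝ} (ht : 1 ≤ t) : 0 ≤ _root_.arcosh t := by
  unfold _root_.arcosh
  have : (1 : ℝ) ≤ t + Real.sqrt (t ^ 2 - 1) := by
    have := Real.sqrt_nonneg (t ^ 2 - 1); linarith
  exact Real.log_nonneg this

lemma arcosh_eq_zero_iff {t : ℝ} (ht : 1 ≤ t) : _root_.arcosh t = 0 ↔ t = 1 := by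
  constructor
  · intro h
    unfold _root_.arcosh at h
    have hs := Real.sqrt_nonneg (t ^ 2 - 1)
    have hpos : 0 < t + Real.sqrt (t ^ 2 - 1) := by linarith
    have := Real.exp_log hpos
    rw [h, Real.exp_zero] at this
    -- t + sqrt(t^2-1) = 1, sqrt ≥ 0, t ≥ 1 ⇒ t = 1
    linarith [hs]
  · intro h
    subst h
    simp [_root_.arcosh]

lemma arcosh_mono {s t : ℝ} (hs : 1 ≤ s) (hst : s ≤ t) : _root_.arcosh s ≤ _root_.arcosh t := by
  unfold _root_.arcosh
  apply Real.log_le_log (by nlinarith [Real.sqrt_nonneg (s ^ 2 - 1)])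
  have hsq : Real.sqrt (s ^ 2 - 1) ≤ Real.sqrt (t ^ 2 - 1) :=
    Real.sqrt_le_sqrt (by nlinarith)
  linarith

lemma arcosh_triangle {a b c : ℝ} (ha : 1 ≤ a) (hb : 1 ≤ b) (hc : 1 ≤ c)
    (h : (a * b - c) ^ 2 ≤ (a ^ 2 - 1) * (b ^ 2 - 1)) :
    _root_.arcosh c ≤ _root_.arcosh a + _root_.arcosh b := by
  set A := Real.sqrt (a ^ 2 - 1) with hA
  set B := Real.sqrt (b ^ 2 - 1) with hB
  have hA0 : 0 ≤ A := Real.sqrt_nonneg _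
  have hB0 : 0 ≤ B := Real.sqrt_nonneg _
  have hA2 : A ^ 2 = a ^ 2 - 1 := Real.sq_sqrt (by nlinarith)
  have hB2 : B ^ 2 = b ^ 2 - 1 := Real.sq_sqrt (by nlinarith)
  have hAB2 : (A * B) ^ 2 = (a ^ 2 - 1) * (b ^ 2 - 1) := by rw [mul_pow, hA2, hB2]
  have hcle : c ≤ a * b + A * B := by nlinarith [mul_nonneg hA0 hB0, h, hAB2]
  have hid : (a * b + A * B) ^ 2 - 1 = (a * B + b * A) ^ 2 := by
    linear_combination hAB2 - a ^ 2 * hB2 - b ^ 2 * hA2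
  have h2 : c ^ 2 - 1 ≤ (a * B + b * A) ^ 2 := by nlinarith [hcle, hc, hid]
  have hsqrt : Real.sqrt (c ^ 2 - 1) ≤ a * B + b * A := by
    have hnn : 0 ≤ a * B + b * A := by positivity
    calc Real.sqrt (c ^ 2 - 1) ≤ Real.sqrt ((a * B + b * A) ^ 2) := Real.sqrt_le_sqrt h2
      _ = a * B + b * A := by rw [Real.sqrt_sq hnn]
  have hsum : c + Real.sqrt (c ^ 2 - 1) ≤ (a + A) * (b + B) := by nlinarith [hcle, hsqrt]
  have hcpos : (0 : ℝ) < c + Real.sqrt (c ^ 2 - 1) := by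
    have := Real.sqrt_nonneg (c ^ 2 - 1); linarith
  have haA : (0 : ℝ) < a + A := by linarith
  have hbB : (0 : ℝ) < b + B := by linarith
  unfold _root_.arcosh
  calc Real.log (c + Real.sqrt (c ^ 2 - 1)) ≤ Real.log ((a + A) * (b + B)) :=
        Real.log_le_log hcpos hsum
    _ = Real.log (a + A) + Real.log (b + B) := Real.log_mul (ne_of_gt haA) (ne_of_gt hbB)

/-- d_𝕃 is a metric on 𝕃ⁿ. -/
theorem dL_is_metric {n : ℕ} (x y z : Fin (n + 1) → ℝ)
    (hx : x ∈ Hyp n) (hy : y ∈ Hyp n) (hz : z ∈ Hyp n) :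
    0 ≤ dL x y ∧ (dL x y = 0 ↔ x = y) ∧ dL x y = dL y x ∧ dL x z ≤ dL x y + dL y z := by
  have hxy1 := neg_lprod_ge_one hx hy
  have hyz1 := neg_lprod_ge_one hy hz
  have hxz1 := neg_lprod_ge_one hx hz
  refine ⟨_root_.arcosh_nonneg hxy1, ?_, ?_, ?_⟩
  · constructor
    · intro h
      exact eq_of_neg_lprod_eq_one hx hy ((_root_.arcosh_eq_zero_iff hxy1).1 h)
    · intro h
      subst h
      have h1 : -(lprod x x) = 1 := by rw [hx.1]; ring
      unfold dL
      rw [h1]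
      exact (_root_.arcosh_eq_zero_iff le_rfl).2 rfl
  · unfold dL; rw [lprod_comm]
  · exact arcosh_triangle hxy1 hyz1 hxz1 (triangle_core hx hy hz)
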